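/- Let d ≥ 1, t₀ ∈ ℝ, and k > 0. Let P : ℝ → ℝ^{d×d} and c : ℝ → ℝ^d be such that P(t) is symmetric positive definite for every t ≥ t₀ (the time-varying end-effector ellipsoid), let B ∈ ℝ^{d×d} be symmetric positive definite and o ∈ ℝ^d (the obstacle ellipsoid), and let p_s : ℝ → ℝ^d satisfy ‖p_s(t)‖ = 1 for all t ≥ t₀ (the virtual auxiliary state). Define H(t) := h(P(t), c(t), B, o, p_s(t)). Assume H is differentiable on [t₀, ∞), H(t₀) > 0, and H'(t) ≥ −k·H(t) for all t ≥ t₀. Then for every t ≥ t₀ and for all sets S_A ⊆ E(P(t), c(t)) and S_O ⊆ E(B, o), we have S_A ∩ S_O = ∅; in particular, the physical end-effector (enclosed in E(P(t), c(t))) never collides with the obstacle (enclosed in E(B, o)). -/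

import Mathlib

open scoped RealInnerProductSpace

/-- The linear action of a matrix `A` on `EuclideanSpace ℝ (Fin d)`. -/
noncomputable def mv {d : ℕ} (A : Matrix (Fin d) (Fin d) ℝ)
    (x : EuclideanSpace ℝ (Fin d)) : EuclideanSpace ℝ (Fin d) :=
  (WithLp.equiv 2 (Fin d → ℝ)).symm (A.mulVec ((WithLp.equiv 2 (Fin d → ℝ)) x))

/-- The ellipsoid `E(A, c) = {c + A·s : ‖s‖ ≤ 1}`. -/
noncomputable def ellipsoid {d : ℕ} (A : Matrix (Fin d) (Fin d) ℝ)
    (c : EuclideanSpace ℝ (Fin d)) : Set (EuclideanSpace ℝ (Fin d)) :=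
  {y | ∃ s : EuclideanSpace ℝ (Fin d), ‖s‖ ≤ 1 ∧ y = c + mv A s}

/-- The barrier value `h(A,c,B,o,p_s) = (−‖B·n‖ + ⟪o − c, n⟫ − 1)/‖n‖` with
`n = A⁻¹·p_s` (Eq. (9) of the paper). -/
noncomputable def barrier {d : ℕ} (A : Matrix (Fin d) (Fin d) ℝ)
    (c : EuclideanSpace ℝ (Fin d)) (B : Matrix (Fin d) (Fin d) ℝ)
    (o : EuclideanSpace ℝ (Fin d)) (ps : EuclideanSpace ℝ (Fin d)) : ℝ :=
  (-‖mv B (mv A⁻¹ ps)‖ + ⟪o - c, mv A⁻¹ ps⟫ - 1) / ‖mv A⁻¹ ps‖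

open Matrix

lemma mv_mv {d : ℕ} (A B : Matrix (Fin d) (Fin d) ℝ) (x : EuclideanSpace ℝ (Fin d)) :
    mv A (mv B x) = mv (A * B) x := by
  simp [mv, Matrix.mulVec_mulVec]

lemma mv_one {d : ℕ} (x : EuclideanSpace ℝ (Fin d)) : mv 1 x = x := by
  simp [mv]

open Matrix in
lemma mv_zero {d : ℕ} (A : Matrix (Fin d) (Fin d) ℝ) : mv A 0 = 0 := by
  simp [mv]

lemma inner_mv {d : ℕ} (M : Matrix (Fin d) (Fin d) ℝ) (x y : EuclideanSpace ℝ (Fin d)) :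
    ⟪mv M x, y⟫ = ⟪x, mv Mᵀ y⟫ := by
  simp only [mv, PiLp.inner_apply, RCLike.inner_apply, conj_trivial]
  have : ∀ (v w : Fin d → ℝ), ∑ i, v i * w i = v ⬝ᵥ w := fun v w => rfl
  rw [this, this]
  change ((WithLp.equiv 2 (Fin d → ℝ)) y) ⬝ᵥ (M *ᵥ ((WithLp.equiv 2 (Fin d → ℝ)) x))
      = (Mᵀ *ᵥ ((WithLp.equiv 2 (Fin d → ℝ)) y)) ⬝ᵥ ((WithLp.equiv 2 (Fin d → ℝ)) x)
  rw [dotProduct_mulVec, mulVec_transpose]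


lemma barrier_disjoint {d : ℕ} {A B : Matrix (Fin d) (Fin d) ℝ}
    (hA : A.PosDef) (hB : B.PosDef)
    {c o ps : EuclideanSpace ℝ (Fin d)} (hps : ‖ps‖ = 1)
    (hbar : 0 < barrier A c B o ps) :
    ellipsoid A c ∩ ellipsoid B o = ∅ := by
  have hAT : Aᵀ = A := by
    rw [← Matrix.conjTranspose_eq_transpose_of_trivial]; exact hA.1
  have hBT : Bᵀ = B := by
    rw [← Matrix.conjTranspose_eq_transpose_of_trivial]; exact hB.1
  set n : EuclideanSpace ℝ (Fin d) := mv A⁻¹ ps with hn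
  have hAn : mv A n = ps := by
    rw [hn, mv_mv, Matrix.mul_nonsing_inv A hA.det_pos.ne'.isUnit, mv_one]
  have hnne : n ≠ 0 := by
    intro h
    have : ps = 0 := by rw [← hAn, h, mv_zero]
    simp [this] at hps
  have hnpos : 0 < ‖n‖ := norm_pos_iff.mpr hnne
  have hnum : 1 + ‖mv B n‖ < ⟪o - c, n⟫ := by
    have hb : 0 < (-‖mv B n‖ + ⟪o - c, n⟫ - 1) / ‖n‖ := hbar
    have := (div_pos_iff.mp hb).resolve_right (fun h => absurd hnpos (by linarith [h.2]))
    linarith [this.1]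
  ext x
  simp only [Set.mem_inter_iff, Set.mem_empty_iff_false, iff_false, not_and]
  rintro ⟨s, hs, rfl⟩ ⟨u, hu, hux⟩
  have hoc : o - c = mv A s - mv B u := by
    rw [sub_eq_sub_iff_add_eq_add]
    exact hux.symm.trans (add_comm _ _)
  have h1 : ⟪mv A s, n⟫ ≤ 1 := by
    rw [inner_mv, hAT, hAn]
    calc ⟪s, ps⟫ ≤ ‖s‖ * ‖ps‖ := real_inner_le_norm s ps
    _ ≤ 1 := by rw [hps]; simpa using hs
  have h2 : -⟪mv B u, n⟫ ≤ ‖mv B n‖ := by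
    rw [inner_mv, hBT]
    calc -⟪u, mv B n⟫ ≤ |⟪u, mv B n⟫| := neg_le_abs _
    _ ≤ ‖u‖ * ‖mv B n‖ := abs_real_inner_le_norm _ _
    _ ≤ 1 * ‖mv B n‖ := by gcongr
    _ = ‖mv B n‖ := one_mul _
  have : ⟪o - c, n⟫ = ⟪mv A s, n⟫ - ⟪mv B u, n⟫ := by
    rw [hoc, inner_sub_left]
  linarith

/-- **Theorem 1 of the paper, AEGIS safety guarantee.**
With a time-varying end-effector ellipsoid `E(P t, c t)`, a fixed obstacle
ellipsoid `E(B, o)`, and a unit virtual state `p_s t`, let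
`H t = h(P t, c t, B, o, p_s t)` be the barrier value. If `H` is
differentiable on `[t₀, ∞)`, `H t₀ > 0`, and `H' t ≥ −k·H t` for all
`t ≥ t₀` (with `k > 0`), then for every `t ≥ t₀` any set contained in the
end-effector ellipsoid is disjoint from any set contained in the obstacle
ellipsoid: the physical end-effector never collides with the obstacle. -/
theorem stmt12 {d : ℕ} (hd : 1 ≤ d) (t₀ k : ℝ) (hk : 0 < k)
    (P : ℝ → Matrix (Fin d) (Fin d) ℝ) (c : ℝ → EuclideanSpace ℝ (Fin d))
    (hP : ∀ t ∈ Set.Ici t₀, (P t).PosDef)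
    (B : Matrix (Fin d) (Fin d) ℝ) (hB : B.PosDef)
    (o : EuclideanSpace ℝ (Fin d))
    (ps : ℝ → EuclideanSpace ℝ (Fin d)) (hps : ∀ t ∈ Set.Ici t₀, ‖ps t‖ = 1)
    (H H' : ℝ → ℝ) (hHdef : ∀ t, H t = barrier (P t) (c t) B o (ps t))
    (hderiv : ∀ t ∈ Set.Ici t₀, HasDerivWithinAt H (H' t) (Set.Ici t₀) t)
    (hH0 : H t₀ > 0)
    (hineq : ∀ t ∈ Set.Ici t₀, H' t ≥ -k * H t) :
    ∀ t ∈ Set.Ici t₀,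
      ∀ SA ⊆ ellipsoid (P t) (c t), ∀ SO ⊆ ellipsoid B o, SA ∩ SO = ∅ := by
  have hHpos : ∀ t ∈ Set.Ici t₀, 0 < H t := by
    set G : ℝ → ℝ := fun t => H t * Real.exp (k * (t - t₀)) with hG
    have hexp : ∀ x : ℝ, HasDerivAt (fun t => Real.exp (k * (t - t₀)))
        (Real.exp (k * (x - t₀)) * k) x := by
      intro x
      have h3 := (Real.hasDerivAt_exp (k * (x - t₀))).comp x
        (by simpa using ((hasDerivAt_id x).sub_const t₀).const_mul k)
      exact h3
    have hGmono : MonotoneOn G (Set.Ici t₀) := by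
      apply monotoneOn_of_hasDerivWithinAt_nonneg (convex_Ici t₀)
        (f' := fun t => H' t * Real.exp (k * (t - t₀)) + H t * (Real.exp (k * (t - t₀)) * k))
      · exact fun x hx => ((hderiv x hx).continuousWithinAt.mul
          (hexp x).continuousAt.continuousWithinAt)
      · intro x hx
        rw [interior_Ici]
        rw [interior_Ici] at hx
        exact ((hderiv x (le_of_lt hx : t₀ ≤ x)).mono Set.Ioi_subset_Ici_self).mul
          (hexp x).hasDerivWithinAt
      · intro x hx
        rw [interior_Ici] at hx
        have := hineq x (le_of_lt hx : t₀ ≤ x)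
        nlinarith [Real.exp_pos (k * (x - t₀))]
    intro t ht
    have hle : G t₀ ≤ G t := hGmono Set.self_mem_Ici ht ht
    have hG0 : G t₀ = H t₀ := by simp [hG]
    have := Real.exp_pos (k * (t - t₀))
    have hGt : G t = H t * Real.exp (k * (t - t₀)) := rfl
    nlinarith [hle, hG0]
  intro t ht SA hSA SO hSO
  have hdisj := barrier_disjoint (hP t ht) hB (hps t ht)
    (by rw [← hHdef t]; exact hHpos t ht)
  exact Set.eq_empty_of_subset_empty (hdisj ▸ Set.inter_subset_inter hSA hSO)
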